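/- arXiv:1101.3897 — 3 statements merged into one kernel-verified Lean document; each statement's English description precedes it below -/
import Mathlib

section
/- Let A be a torsion-free commutative ring and f : A → B a faithfully flat ring map. If G and G' are formal group laws over A such that f*G and f*G' are strictly isomorphic over B, then G and G' are strictly isomorphic over A. -/
open TensorProduct

section FF
variable {A B : Type*} [CommRing A] [CommRing B] [Algebra A B]

/-- For faithfully flat `B`, the map `n ↦ 1 ⊗ n` is injective on any module. -/
lemma ff_mk_injective [Module.FaithfullyFlat A B]
    (N : Type*) [AddCommGroup N] [Module A N] :
    Function.Injective (fun n : N => (1 : B) ⊗ₜ[A] n) := by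
  have key : ∀ n : N, (1 : B) ⊗ₜ[A] n = 0 → n = 0 := by
    intro x hx
    by_contra hx0
    -- annihilator of x
    let I := (Submodule.span A {x}).annihilator
    have I_ne_top : I ≠ ⊤ := by
      intro h
      rw [Ideal.eq_top_iff_one, Submodule.mem_annihilator_span_singleton, one_smul] at h
      exact hx0 h
    let inc : A ⧸ I →ₗ[A] N := Submodule.liftQ _ ((LinearMap.lsmul A N).flip x) <| fun r hr => by
      simpa only [LinearMap.mem_ker, LinearMap.flip_apply, LinearMap.lsmul_apply,
        Submodule.mem_annihilator_span_singleton, I] using hr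
    have injective_inc : Function.Injective inc := by
      rw [← LinearMap.ker_eq_bot, eq_bot_iff]
      intro r hr
      induction r using Quotient.inductionOn' with | h r =>
      simpa only [Submodule.Quotient.mk''_eq_mk, Submodule.mem_bot, Submodule.Quotient.mk_eq_zero,
        Submodule.mem_annihilator_span_singleton, LinearMap.mem_ker, Submodule.liftQ_apply,
        LinearMap.flip_apply, LinearMap.lsmul_apply, I, inc] using hr
    have hnontriv : Nontrivial (A ⧸ I) :=
      Submodule.Quotient.nontrivial_iff.mpr I_ne_top
    -- the element 1 ⊗ [1] maps to 1 ⊗ x = 0 under an injective map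
    have h1 : (1 : B) ⊗ₜ[A] (Submodule.Quotient.mk (1:A) : A ⧸ I) = 0 := by
      have hinj : Function.Injective (LinearMap.lTensor B inc) :=
        Module.Flat.lTensor_preserves_injective_linearMap inc injective_inc
      apply hinj
      rw [map_zero, LinearMap.lTensor_tmul]
      have : inc (Submodule.Quotient.mk (1:A)) = x := by
        simp only [inc, Submodule.liftQ_apply, LinearMap.flip_apply, LinearMap.lsmul_apply,
          one_smul]
      rw [this, hx]
    -- but then B ⊗ (A ⧸ I) is trivial
    have hsub : Subsingleton (B ⊗[A] (A ⧸ I)) := by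
      constructor
      have hz : ∀ z : B ⊗[A] (A ⧸ I), z = 0 := by
        intro z
        induction z using TensorProduct.induction_on with
        | zero => rfl
        | tmul b q =>
          induction q using Quotient.inductionOn' with | h r =>
          show b ⊗ₜ[A] (Submodule.Quotient.mk r : A ⧸ I) = 0
          have e1 : (Submodule.Quotient.mk r : A ⧸ I) =
              r • (Submodule.Quotient.mk (1:A) : A ⧸ I) := by
            rw [← Submodule.Quotient.mk_smul, smul_eq_mul, mul_one]
          rw [e1, ← TensorProduct.smul_tmul]
          calc (r • b) ⊗ₜ[A] (Submodule.Quotient.mk (1:A) : A ⧸ I)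
              = (r • b) • ((1:B) ⊗ₜ[A] (Submodule.Quotient.mk (1:A) : A ⧸ I)) := by
                rw [TensorProduct.smul_tmul', smul_eq_mul, mul_one]
            _ = 0 := by rw [h1, smul_zero]
        | add u v hu hv => rw [hu, hv, add_zero]
      intro a b; rw [hz a, hz b]
    exact (not_subsingleton_iff_nontrivial.2
      (Module.FaithfullyFlat.lTensor_nontrivial A B (A ⧸ I))) hsub
  intro n m hnm
  have hnm' : (1:B) ⊗ₜ[A] n = 1 ⊗ₜ[A] m := hnm
  have : (1:B) ⊗ₜ[A] (n - m) = 0 := by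
    rw [TensorProduct.tmul_sub, hnm']; simp
  exact sub_eq_zero.mp (key _ this)

/-- A faithfully flat algebra map is injective. -/
lemma ff_algebraMap_injective [Module.FaithfullyFlat A B] :
    Function.Injective (algebraMap A B) := by
  intro a a' haa
  apply ff_mk_injective (A := A) (B := B) A
  show (1:B) ⊗ₜ[A] a = 1 ⊗ₜ[A] a'
  calc (1:B) ⊗ₜ[A] a = a • ((1:B) ⊗ₜ[A] (1:A)) := by
        rw [TensorProduct.smul_tmul', TensorProduct.smul_tmul, smul_eq_mul, mul_one]
    _ = (algebraMap A B a) ⊗ₜ[A] (1:A) := by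
        rw [TensorProduct.smul_tmul', Algebra.smul_def, mul_one]
    _ = (algebraMap A B a') ⊗ₜ[A] (1:A) := by rw [haa]
    _ = a' • ((1:B) ⊗ₜ[A] (1:A)) := by
        rw [TensorProduct.smul_tmul', Algebra.smul_def, mul_one]
    _ = 1 ⊗ₜ[A] a' := by
        rw [TensorProduct.smul_tmul', TensorProduct.smul_tmul, smul_eq_mul, mul_one]

/-- Divisibility descends along a faithfully flat algebra map. -/
lemma ff_dvd_descent [Module.FaithfullyFlat A B] (v w : A) (b : B)
    (hw : algebraMap A B w = algebraMap A B v * b) : ∃ a : A, w = v * a := by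
  set I : Ideal A := Ideal.span {v} with hI
  have hmem : w ∈ I := by
    have h0 : (1:B) ⊗ₜ[A] (Submodule.Quotient.mk w : A ⧸ I) = 0 := by
      calc (1:B) ⊗ₜ[A] (Submodule.Quotient.mk w : A ⧸ I)
          = (1:B) ⊗ₜ[A] (w • (Submodule.Quotient.mk (1:A) : A ⧸ I)) := by
            rw [← Submodule.Quotient.mk_smul, smul_eq_mul, mul_one]
        _ = (w • (1:B)) ⊗ₜ[A] (Submodule.Quotient.mk (1:A) : A ⧸ I) := by
            rw [TensorProduct.smul_tmul]
        _ = (algebraMap A B v * b) ⊗ₜ[A] (Submodule.Quotient.mk (1:A) : A ⧸ I) := by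
            rw [Algebra.smul_def, mul_one, hw]
        _ = (v • b) ⊗ₜ[A] (Submodule.Quotient.mk (1:A) : A ⧸ I) := by
            rw [Algebra.smul_def]
        _ = b ⊗ₜ[A] (v • (Submodule.Quotient.mk (1:A) : A ⧸ I)) := by
            rw [TensorProduct.smul_tmul]
        _ = b ⊗ₜ[A] (Submodule.Quotient.mk v : A ⧸ I) := by
            rw [← Submodule.Quotient.mk_smul, smul_eq_mul, mul_one]
        _ = b ⊗ₜ[A] (0 : A ⧸ I) := by
            rw [(Submodule.Quotient.mk_eq_zero I).2 (Ideal.mem_span_singleton_self v)]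
        _ = 0 := TensorProduct.tmul_zero _ b
    have hz : (1:B) ⊗ₜ[A] (Submodule.Quotient.mk w : A ⧸ I) = (1:B) ⊗ₜ[A] (0 : A ⧸ I) := by
      rw [h0, TensorProduct.tmul_zero]
    have := ff_mk_injective (A := A) (B := B) (A ⧸ I) hz
    exact (Submodule.Quotient.mk_eq_zero I).1 this
  obtain ⟨a, ha⟩ := Ideal.mem_span_singleton'.1 hmem
  exact ⟨a, by rw [← ha, mul_comm]⟩

/-- A flat module over a `ℤ`-torsion-free ring is `ℤ`-torsion-free (we only need
regularity of positive integers). -/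
lemma flat_nat_regular [Module.Flat A B] [NoZeroSMulDivisors ℤ A]
    (n : ℕ) (hn : n ≠ 0) (b : B) (hb : (n : B) * b = 0) : b = 0 := by
  -- multiplication by (n : A) on A is injective
  have hreg : Function.Injective (LinearMap.lsmul A A ((n : ℕ) : A)) := by
    intro x y hxy
    simp only [LinearMap.lsmul_apply, smul_eq_mul] at hxy
    have h2 : ((n : ℕ) : A) * (x - y) = 0 := by linear_combination hxy
    have h3 : ((n:ℤ) • (x - y) : A) = 0 := by
      rw [zsmul_eq_mul]
      push_cast
      exact h2
    have := (smul_eq_zero.1 h3).resolve_left (by exact_mod_cast hn)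
    exact sub_eq_zero.1 this
  have hinj : Function.Injective (LinearMap.lTensor B (LinearMap.lsmul A A ((n:ℕ) : A))) :=
    Module.Flat.lTensor_preserves_injective_linearMap _ hreg
  -- transport along B ⊗[A] A ≃ B
  have key : ∀ c : B, ((n:ℕ):A) • c = 0 → c = 0 := by
    intro c hc
    have h1 : (LinearMap.lTensor B (LinearMap.lsmul A A ((n:ℕ):A))) (c ⊗ₜ[A] (1:A)) = 0 := by
      rw [LinearMap.lTensor_tmul, LinearMap.lsmul_apply, ← TensorProduct.smul_tmul, hc]
      exact TensorProduct.zero_tmul _ _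
    have h2 : c ⊗ₜ[A] (1:A) = 0 := by
      apply hinj; rw [h1, map_zero]
    have := congrArg (TensorProduct.rid A B) h2
    rw [map_zero] at this
    rwa [TensorProduct.rid_tmul, one_smul] at this
  apply key
  rw [Algebra.smul_def, map_natCast]
  exact hb
end FF



/-!
STATEMENT 0: Descent of strict isomorphisms of formal group laws along a
faithfully flat map out of a torsion-free ring.
-/

open Finset

noncomputable section

/-- The exponent `(a, b)` viewed as a monomial index for `MvPowerSeries (Fin 2)`. -/
def idx (a b : ℕ) : Fin 2 →₀ ℕ := Finsupp.single 0 a + Finsupp.single 1 b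

variable {R : Type*} [CommRing R]

/-- Substitution of a two-variable power series `F` (with zero constant term)
into a one-variable power series `h`, i.e. `h(F(x,y))`, defined coefficientwise. -/
def substIn (h : PowerSeries R) (F : MvPowerSeries (Fin 2) R) : MvPowerSeries (Fin 2) R :=
  fun d => ∑ n ∈ Finset.range (d.sum (fun _ e => e) + 1),
    PowerSeries.coeff n h * MvPowerSeries.coeff d (F ^ n)

/-- Substitution of a one-variable power series `h` (with zero constant term) into
both variables of a two-variable power series `F`, i.e. `F(h(x), h(y))`. -/
def substVars (F : MvPowerSeries (Fin 2) R) (h : PowerSeries R) : MvPowerSeries (Fin 2) R :=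
  fun d => ∑ a ∈ Finset.range (d 0 + 1), ∑ b ∈ Finset.range (d 1 + 1),
    MvPowerSeries.coeff (idx a b) F * (PowerSeries.coeff (d 0) (h ^ a)) *
      (PowerSeries.coeff (d 1) (h ^ b))

section IdxLemmas

lemma idx_fst (a b : ℕ) : idx a b 0 = a := by
  simp [idx, Finsupp.single_apply]

lemma idx_snd (a b : ℕ) : idx a b 1 = b := by
  simp [idx, Finsupp.single_apply]

lemma eq_idx (d : Fin 2 →₀ ℕ) : d = idx (d 0) (d 1) := by
  ext i
  fin_cases i
  · simp [idx_fst]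
  · simp [idx_snd]

lemma idx_zero : idx 0 0 = 0 := by
  simp [idx]

lemma idx_sum (a b : ℕ) : (idx a b).sum (fun _ e => e) = a + b := by
  rw [Finsupp.sum_fintype _ _ (fun _ => rfl), Fin.sum_univ_two, idx_fst, idx_snd]

lemma coeff_mul_idx (φ ψ : MvPowerSeries (Fin 2) R) (a b : ℕ) :
    MvPowerSeries.coeff (idx a b) (φ * ψ) =
      ∑ i ∈ Finset.range (a + 1), ∑ j ∈ Finset.range (b + 1),
        MvPowerSeries.coeff (idx i j) φ * MvPowerSeries.coeff (idx (a - i) (b - j)) ψ := by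
  rw [MvPowerSeries.coeff_mul, ← Finset.sum_product']
  refine Finset.sum_nbij' (i := fun u => (u.1 0, u.1 1))
    (j := fun p => (idx p.1 p.2, idx (a - p.1) (b - p.2))) ?_ ?_ ?_ ?_ ?_
  · intro u hu
    rw [Finset.HasAntidiagonal.mem_antidiagonal] at hu
    have h0 : u.1 0 + u.2 0 = a := by
      have := congrArg (fun d => d 0) hu
      simpa [idx_fst] using this
    have h1 : u.1 1 + u.2 1 = b := by
      have := congrArg (fun d => d 1) hu
      simpa [idx_snd] using this
    simp only [Finset.mem_product, Finset.mem_range]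
    omega
  · intro p hp
    simp only [Finset.mem_product, Finset.mem_range] at hp
    rw [Finset.HasAntidiagonal.mem_antidiagonal]
    rw [eq_idx (idx p.1 p.2 + idx (a - p.1) (b - p.2))]
    simp only [Finsupp.add_apply, idx_fst, idx_snd]
    rw [show p.1 + (a - p.1) = a by omega, show p.2 + (b - p.2) = b by omega]
  · intro u hu
    rw [Finset.HasAntidiagonal.mem_antidiagonal] at hu
    have h0 : u.1 0 + u.2 0 = a := by
      have := congrArg (fun d => d 0) hu
      simpa [idx_fst] using this
    have h1 : u.1 1 + u.2 1 = b := by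
      have := congrArg (fun d => d 1) hu
      simpa [idx_snd] using this
    have e1 : idx (u.1 0) (u.1 1) = u.1 := (eq_idx u.1).symm
    have e2 : idx (a - u.1 0) (b - u.1 1) = u.2 := by
      rw [eq_idx u.2]
      congr 1 <;> omega
    show (idx (u.1 0) (u.1 1), idx (a - u.1 0) (b - u.1 1)) = u
    rw [e1, e2]
  · intro p hp
    show ((idx p.1 p.2) 0, (idx p.1 p.2) 1) = p
    rw [idx_fst, idx_snd]
  · intro u hu
    rw [Finset.HasAntidiagonal.mem_antidiagonal] at hu
    have h0 : u.1 0 + u.2 0 = a := by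
      have := congrArg (fun d => d 0) hu
      simpa [idx_fst] using this
    have h1 : u.1 1 + u.2 1 = b := by
      have := congrArg (fun d => d 1) hu
      simpa [idx_snd] using this
    show _ = MvPowerSeries.coeff (idx (u.1 0) (u.1 1)) φ *
      MvPowerSeries.coeff (idx (a - u.1 0) (b - u.1 1)) ψ
    have e1 : idx (u.1 0) (u.1 1) = u.1 := (eq_idx u.1).symm
    have e2 : idx (a - u.1 0) (b - u.1 1) = u.2 := by
      rw [eq_idx u.2]
      congr 1 <;> omega
    rw [e1, e2]

end IdxLemmas

section OrderLemmas

/-- helper: sum of `if i + 1 = a` deltas over a range -/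
lemma sum_delta_pred (c : ℕ → R) (a : ℕ) :
    (∑ i ∈ Finset.range (a + 1), if i + 1 = a then c i else 0) =
      if a = 0 then 0 else c (a - 1) := by
  rcases a with _ | a'
  · simp
  · rw [if_neg (Nat.succ_ne_zero a')]
    have : ∀ i, (if i + 1 = a' + 1 then c i else 0) = if i = a' then c i else 0 := by
      intro i
      congr 1
      · simp [Nat.succ_inj]
    simp_rw [this]
    rw [Finset.sum_ite_eq' (Finset.range (a' + 2)) a' c,
      if_pos (Finset.mem_range.2 (by omega))]
    simp

lemma mv_coeff_pow_of_lt (φ : MvPowerSeries (Fin 2) R)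
    (h00 : MvPowerSeries.coeff (idx 0 0) φ = 0) :
    ∀ (m a b : ℕ), a + b < m → MvPowerSeries.coeff (idx a b) (φ ^ m) = 0 := by
  intro m
  induction m with
  | zero => omega
  | succ m ih =>
    intro a b hab
    rw [pow_succ, coeff_mul_idx]
    apply Finset.sum_eq_zero
    intro i hi
    apply Finset.sum_eq_zero
    intro j hj
    rw [Finset.mem_range] at hi hj
    by_cases huv : a - i = 0 ∧ b - j = 0
    · rw [huv.1, huv.2, h00, mul_zero]
    · have : i + j < m := by omega
      rw [ih i j this, zero_mul]

lemma mv_coeff_pow_top (φ : MvPowerSeries (Fin 2) R)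
    (h00 : MvPowerSeries.coeff (idx 0 0) φ = 0)
    (h10 : MvPowerSeries.coeff (idx 1 0) φ = 1)
    (h01 : MvPowerSeries.coeff (idx 0 1) φ = 1) :
    ∀ (m a b : ℕ), a + b = m → MvPowerSeries.coeff (idx a b) (φ ^ m) = (m.choose a : R) := by
  intro m
  induction m with
  | zero =>
    intro a b hab
    obtain ⟨rfl, rfl⟩ : a = 0 ∧ b = 0 := by omega
    rw [pow_zero, idx_zero]
    simp [MvPowerSeries.coeff_one]
  | succ m ih =>
    intro a b hab
    rw [pow_succ, coeff_mul_idx]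
    have step : ∀ i ∈ Finset.range (a + 1), ∀ j ∈ Finset.range (b + 1),
        MvPowerSeries.coeff (idx i j) (φ ^ m) *
          MvPowerSeries.coeff (idx (a - i) (b - j)) φ =
        (if j = b then (if i + 1 = a then (m.choose i : R) else 0) else 0)
          + (if j + 1 = b then (if i = a then (m.choose i : R) else 0) else 0) := by
      intro i hi j hj
      rw [Finset.mem_range] at hi hj
      have hcase : (a - i) + (b - j) = 0 ∨ ((a-i) = 1 ∧ (b-j) = 0) ∨ ((a-i) = 0 ∧ (b-j) = 1)
          ∨ 2 ≤ (a - i) + (b - j) := by omega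
      rcases hcase with hc | hc | hc | hc
      · rw [show a - i = 0 by omega, show b - j = 0 by omega, h00, mul_zero,
          if_pos (show j = b by omega), if_neg (show ¬ i + 1 = a by omega),
          if_neg (show ¬ j + 1 = b by omega), add_zero]
      · rw [hc.1, hc.2, h10, mul_one, ih i j (by omega),
          if_pos (show j = b by omega), if_pos (show i + 1 = a by omega),
          if_neg (show ¬ j + 1 = b by omega), add_zero]
      · rw [hc.1, hc.2, h01, mul_one, ih i j (by omega),
          if_neg (show ¬ j = b by omega), if_pos (show j + 1 = b by omega),
          if_pos (show i = a by omega), zero_add]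
      · rw [mv_coeff_pow_of_lt φ h00 m i j (by omega), zero_mul]
        have e1 : (if j = b then (if i + 1 = a then (m.choose i : R) else 0) else 0) = 0 := by
          split_ifs with hA hB
          · exact absurd hB (by omega)
          · rfl
          · rfl
        have e2 : (if j + 1 = b then (if i = a then (m.choose i : R) else 0) else 0) = 0 := by
          split_ifs with hA hB
          · exact absurd hB (by omega)
          · rfl
          · rfl
        rw [e1, e2, add_zero]
    rw [Finset.sum_congr rfl (fun i hi => Finset.sum_congr rfl (fun j hj => step i hi j hj))]
    have main : (∑ i ∈ Finset.range (a+1), ∑ j ∈ Finset.range (b+1),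
        ((if j = b then (if i + 1 = a then (m.choose i : R) else 0) else 0)
          + (if j + 1 = b then (if i = a then (m.choose i : R) else 0) else 0)))
        = (if a = 0 then 0 else (m.choose (a-1) : R))
          + (if b = 0 then 0 else (m.choose a : R)) := by
      simp_rw [Finset.sum_add_distrib]
      congr 1
      · have inner : ∀ i : ℕ, (∑ j ∈ Finset.range (b+1),
            if j = b then (if i + 1 = a then (m.choose i : R) else 0) else 0)
            = (if i + 1 = a then (m.choose i : R) else 0) := fun i => by
          rw [Finset.sum_ite_eq' (Finset.range (b+1)) b
            (fun _ => if i + 1 = a then (m.choose i : R) else 0),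
            if_pos (Finset.mem_range.2 (by omega))]
        simp_rw [inner]
        rw [sum_delta_pred]
      · have inner : ∀ i : ℕ, (∑ j ∈ Finset.range (b+1),
            if j + 1 = b then (if i = a then (m.choose i : R) else 0) else 0)
            = if b = 0 then 0 else (if i = a then (m.choose i : R) else 0) := fun i => by
          rw [sum_delta_pred]
        simp_rw [inner]
        by_cases hb : b = 0
        · simp [hb]
        · simp only [if_neg hb]
          rw [Finset.sum_ite_eq' (Finset.range (a+1)) a (fun x => (m.choose x : R)),
            if_pos (Finset.mem_range.2 (by omega))]
    rw [main]
    rcases Nat.eq_zero_or_pos a with ha | ha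
    · subst ha
      rw [if_pos rfl, if_neg (show ¬ b = 0 by omega), zero_add]
      simp
    · rw [if_neg (by omega)]
      by_cases hb : b = 0
      · rw [if_pos hb]
        have : a = m + 1 := by omega
        subst this
        rw [add_zero]
        norm_num [Nat.choose_self, Nat.sub_one, Nat.pred_succ]
      · rw [if_neg hb]
        obtain ⟨a', rfl⟩ : ∃ a', a = a' + 1 := ⟨a - 1, by omega⟩
        rw [Nat.succ_sub_one, Nat.choose_succ_succ (m) a']
        push_cast
        ring

end OrderLemmas

section PSLemmas

lemma ps_coeff_pow_congr (p q : PowerSeries R) :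
    ∀ (a k : ℕ), (∀ m ≤ k, PowerSeries.coeff m p = PowerSeries.coeff m q) →
      PowerSeries.coeff k (p ^ a) = PowerSeries.coeff k (q ^ a) := by
  intro a
  induction a with
  | zero => intro k _; rw [pow_zero, pow_zero]
  | succ a ih =>
    intro k hk
    rw [pow_succ, pow_succ, PowerSeries.coeff_mul, PowerSeries.coeff_mul]
    apply Finset.sum_congr rfl
    intro u hu
    rw [Finset.HasAntidiagonal.mem_antidiagonal] at hu
    rw [ih u.1 (fun m hm => hk m (by omega)), hk u.2 (by omega)]

lemma ps_coeff_pow_of_lt (p : PowerSeries R) (h0 : PowerSeries.constantCoeff p = 0) :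
    ∀ (a k : ℕ), k < a → PowerSeries.coeff k (p ^ a) = 0 := by
  intro a
  induction a with
  | zero => omega
  | succ a ih =>
    intro k hk
    rw [pow_succ, PowerSeries.coeff_mul]
    apply Finset.sum_eq_zero
    intro u hu
    rw [Finset.HasAntidiagonal.mem_antidiagonal] at hu
    by_cases h2 : u.2 = 0
    · rw [h2, PowerSeries.coeff_zero_eq_constantCoeff, h0, mul_zero]
    · rw [ih u.1 (by omega), zero_mul]

lemma ps_coeff_one_pow (p : PowerSeries R) (h0 : PowerSeries.constantCoeff p = 0)
    (h1 : PowerSeries.coeff 1 p = 1) (a : ℕ) :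
    PowerSeries.coeff 1 (p ^ a) = if a = 1 then 1 else 0 := by
  match a with
  | 0 => rw [pow_zero, if_neg (by omega)]; simp [PowerSeries.coeff_one]
  | 1 => rw [pow_one, if_pos rfl, h1]
  | (a+2) => rw [ps_coeff_pow_of_lt p h0 (a+2) 1 (by omega), if_neg (by omega)]

end PSLemmas

section KeyEq

lemma coeff_substIn (p : PowerSeries R) (F : MvPowerSeries (Fin 2) R) (d : Fin 2 →₀ ℕ) :
    MvPowerSeries.coeff d (substIn p F) =
      ∑ m ∈ Finset.range (d.sum (fun _ e => e) + 1),
        PowerSeries.coeff m p * MvPowerSeries.coeff d (F ^ m) := rfl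

lemma key_eq (F F' : MvPowerSeries (Fin 2) R) (h : PowerSeries R)
    (hF0 : MvPowerSeries.coeff (idx 0 0) F = 0)
    (hF10 : MvPowerSeries.coeff (idx 1 0) F = 1)
    (hF01 : MvPowerSeries.coeff (idx 0 1) F = 1)
    (hh0 : PowerSeries.constantCoeff h = 0) (hh1 : PowerSeries.coeff 1 h = 1)
    (heq : substIn h F = substVars F' h) (n : ℕ) (hn : 2 ≤ n) :
    (n : R) * PowerSeries.coeff n h =
      ∑ b ∈ Finset.range n, MvPowerSeries.coeff (idx 1 b) F' *
          PowerSeries.coeff (n-1) (h ^ b)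
        - ∑ m ∈ Finset.range n, PowerSeries.coeff m h *
            MvPowerSeries.coeff (idx 1 (n-1)) (F ^ m) := by
  have hd := congrFun heq (idx 1 (n-1))
  have hL : substIn h F (idx 1 (n-1)) =
      (∑ m ∈ Finset.range n, PowerSeries.coeff m h *
        MvPowerSeries.coeff (idx 1 (n-1)) (F ^ m)) + PowerSeries.coeff n h * (n : R) := by
    show (∑ m ∈ Finset.range ((idx 1 (n-1)).sum (fun _ e => e) + 1),
      PowerSeries.coeff m h * MvPowerSeries.coeff (idx 1 (n-1)) (F ^ m)) = _
    rw [idx_sum, show 1 + (n-1) = n by omega, Finset.sum_range_succ]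
    rw [mv_coeff_pow_top F hF0 hF10 hF01 n 1 (n-1) (by omega), Nat.choose_one_right]
  have hR : substVars F' h (idx 1 (n-1)) =
      ∑ b ∈ Finset.range n, MvPowerSeries.coeff (idx 1 b) F' *
        PowerSeries.coeff (n-1) (h ^ b) := by
    show (∑ a ∈ Finset.range ((idx 1 (n-1)) 0 + 1), ∑ b ∈ Finset.range ((idx 1 (n-1)) 1 + 1),
      MvPowerSeries.coeff (idx a b) F' *
        (PowerSeries.coeff ((idx 1 (n-1)) 0) (h ^ a)) *
        (PowerSeries.coeff ((idx 1 (n-1)) 1) (h ^ b))) = _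
    rw [idx_fst, idx_snd, show (n-1) + 1 = n by omega]
    rw [Finset.sum_range_succ, Finset.sum_range_one]
    have z0 : (∑ b ∈ Finset.range n, MvPowerSeries.coeff (idx 0 b) F' *
        (PowerSeries.coeff 1 (h ^ 0)) * (PowerSeries.coeff (n-1) (h ^ b))) = 0 := by
      apply Finset.sum_eq_zero
      intro b hb
      rw [ps_coeff_one_pow h hh0 hh1 0, if_neg (by omega), mul_zero, zero_mul]
    rw [z0, zero_add]
    apply Finset.sum_congr rfl
    intro b hb
    rw [ps_coeff_one_pow h hh0 hh1 1, if_pos rfl, mul_one]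
  rw [hL] at hd
  rw [hR] at hd
  linear_combination hd

end KeyEq

section MapLemmas

variable {S : Type*} [CommRing S]

lemma coeff_substVars (F : MvPowerSeries (Fin 2) R) (p : PowerSeries R) (d : Fin 2 →₀ ℕ) :
    MvPowerSeries.coeff d (substVars F p) =
      ∑ a ∈ Finset.range (d 0 + 1), ∑ b ∈ Finset.range (d 1 + 1),
        MvPowerSeries.coeff (idx a b) F * (PowerSeries.coeff (d 0) (p ^ a)) *
          (PowerSeries.coeff (d 1) (p ^ b)) := rfl

lemma map_substIn (f : R →+* S) (p : PowerSeries R) (F : MvPowerSeries (Fin 2) R) :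
    MvPowerSeries.map f (substIn p F) =
      substIn (PowerSeries.map f p) (MvPowerSeries.map f F) := by
  apply MvPowerSeries.ext
  intro d
  rw [MvPowerSeries.coeff_map, coeff_substIn, coeff_substIn, map_sum]
  apply Finset.sum_congr rfl
  intro m hm
  rw [map_mul, PowerSeries.coeff_map, ← map_pow, MvPowerSeries.coeff_map]

lemma map_substVars (f : R →+* S) (F : MvPowerSeries (Fin 2) R) (p : PowerSeries R) :
    MvPowerSeries.map f (substVars F p) =
      substVars (MvPowerSeries.map f F) (PowerSeries.map f p) := by
  apply MvPowerSeries.ext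
  intro d
  rw [MvPowerSeries.coeff_map, coeff_substVars, coeff_substVars, map_sum]
  apply Finset.sum_congr rfl
  intro a ha
  rw [map_sum]
  apply Finset.sum_congr rfl
  intro b hb
  rw [map_mul, map_mul, MvPowerSeries.coeff_map, ← map_pow, PowerSeries.coeff_map,
    ← map_pow, PowerSeries.coeff_map]

end MapLemmas

/-- Coefficient of `x^i y^j z^k` in `F(F(x,y),z)`. -/
def assocL (F : MvPowerSeries (Fin 2) R) (i j k : ℕ) : R :=
  ∑ a ∈ Finset.range (i + j + 1),
    MvPowerSeries.coeff (idx a k) F * MvPowerSeries.coeff (idx i j) (F ^ a)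

/-- Coefficient of `x^i y^j z^k` in `F(x,F(y,z))`. -/
def assocR (F : MvPowerSeries (Fin 2) R) (i j k : ℕ) : R :=
  ∑ b ∈ Finset.range (j + k + 1),
    MvPowerSeries.coeff (idx i b) F * MvPowerSeries.coeff (idx j k) (F ^ b)

/-- A (commutative, one-dimensional) formal group law over a commutative ring `R`:
a two-variable power series `F` with `F(x,0) = x`, `F(0,y) = y`, commutativity and
associativity. -/
structure FormalGroupLaw (R : Type*) [CommRing R] where
  F : MvPowerSeries (Fin 2) R
  unit_left : ∀ n : ℕ, MvPowerSeries.coeff (idx n 0) F = if n = 1 then 1 else 0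
  unit_right : ∀ n : ℕ, MvPowerSeries.coeff (idx 0 n) F = if n = 1 then 1 else 0
  comm : ∀ a b : ℕ, MvPowerSeries.coeff (idx a b) F = MvPowerSeries.coeff (idx b a) F
  assoc : ∀ i j k : ℕ, assocL F i j k = assocR F i j k

/-- `h` is a strict isomorphism from the formal group law `F` to `F'`:
`h(x) = x + b₁x² + ⋯` and `h(F(x,y)) = F'(h(x),h(y))`. -/
def IsStrictIso (F F' : MvPowerSeries (Fin 2) R) (h : PowerSeries R) : Prop :=
  PowerSeries.constantCoeff h = 0 ∧ PowerSeries.coeff 1 h = 1 ∧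
    substIn h F = substVars F' h

end

/-- If `A` is torsion-free and `A → B` is faithfully flat, then two
formal group laws over `A` which become strictly isomorphic over `B` are already
strictly isomorphic over `A`. -/
theorem fgl_descent_of_faithfullyFlat
    {A B : Type*} [CommRing A] [CommRing B] [Algebra A B]
    [NoZeroSMulDivisors ℤ A] [Module.FaithfullyFlat A B]
    (G G' : FormalGroupLaw A) (h : PowerSeries B)
    (hiso : IsStrictIso (MvPowerSeries.map (algebraMap A B) G.F)
      (MvPowerSeries.map (algebraMap A B) G'.F) h) :
    ∃ h₀ : PowerSeries A, IsStrictIso G.F G'.F h₀ := by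
  classical
  obtain ⟨hh0, hh1, heq⟩ := hiso
  set f := algebraMap A B with hf
  have hfinj : Function.Injective f := ff_algebraMap_injective
  have hG0 : MvPowerSeries.coeff (idx 0 0) G.F = 0 := by simpa using G.unit_left 0
  have hG10 : MvPowerSeries.coeff (idx 1 0) G.F = 1 := by simpa using G.unit_left 1
  have hG01 : MvPowerSeries.coeff (idx 0 1) G.F = 1 := by simpa using G.unit_right 1
  have hF0 : MvPowerSeries.coeff (idx 0 0) (MvPowerSeries.map f G.F) = 0 := by
    rw [MvPowerSeries.coeff_map, hG0, map_zero]
  have hF10 : MvPowerSeries.coeff (idx 1 0) (MvPowerSeries.map f G.F) = 1 := by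
    rw [MvPowerSeries.coeff_map, hG10, map_one]
  have hF01 : MvPowerSeries.coeff (idx 0 1) (MvPowerSeries.map f G.F) = 1 := by
    rw [MvPowerSeries.coeff_map, hG01, map_one]
  have main : ∀ n : ℕ, ∃ a : A, f a = PowerSeries.coeff n h := by
    intro n
    induction n using Nat.strong_induction_on with
    | _ n IH =>
    rcases Nat.lt_or_ge n 2 with h2 | h2
    · interval_cases n
      · exact ⟨0, by rw [map_zero, PowerSeries.coeff_zero_eq_constantCoeff, hh0]⟩
      · exact ⟨1, by rw [map_one, hh1]⟩
    · choose g hg using IH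
      set P : PowerSeries A := PowerSeries.mk (fun m => if hm : m < n then g m hm else 0)
        with hP
      have hPcoeff : ∀ m, m < n →
          PowerSeries.coeff m (PowerSeries.map f P) = PowerSeries.coeff m h := by
        intro m hm
        rw [PowerSeries.coeff_map, hP, PowerSeries.coeff_mk, dif_pos hm, hg]
      set W : A := (∑ b ∈ Finset.range n, MvPowerSeries.coeff (idx 1 b) G'.F *
            PowerSeries.coeff (n-1) (P ^ b))
          - ∑ m ∈ Finset.range n, PowerSeries.coeff m P *
              MvPowerSeries.coeff (idx 1 (n-1)) (G.F ^ m) with hW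
      have hfW : f W = (n : B) * PowerSeries.coeff n h := by
        have hkey := key_eq (MvPowerSeries.map f G.F) (MvPowerSeries.map f G'.F)
          h hF0 hF10 hF01 hh0 hh1 heq n h2
        have e1 : ∀ b ∈ Finset.range n,
            f (MvPowerSeries.coeff (idx 1 b) G'.F * PowerSeries.coeff (n-1) (P ^ b))
            = MvPowerSeries.coeff (idx 1 b) (MvPowerSeries.map f G'.F) *
                PowerSeries.coeff (n-1) (h ^ b) := by
          intro b hb
          rw [map_mul, MvPowerSeries.coeff_map]
          congr 1
          rw [← PowerSeries.coeff_map, map_pow]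
          exact ps_coeff_pow_congr _ _ b (n-1) (fun m hm => hPcoeff m (by omega))
        have e2 : ∀ m ∈ Finset.range n,
            f (PowerSeries.coeff m P * MvPowerSeries.coeff (idx 1 (n-1)) (G.F ^ m))
            = PowerSeries.coeff m h *
                MvPowerSeries.coeff (idx 1 (n-1)) ((MvPowerSeries.map f G.F) ^ m) := by
          intro m hm
          rw [Finset.mem_range] at hm
          rw [map_mul, ← PowerSeries.coeff_map, hPcoeff m hm]
          congr 1
          rw [← map_pow, MvPowerSeries.coeff_map]
        rw [hW, map_sub, map_sum, map_sum, Finset.sum_congr rfl e1, Finset.sum_congr rfl e2,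
          ← hkey]
      obtain ⟨a, ha⟩ := ff_dvd_descent ((n : A)) W (PowerSeries.coeff n h)
        (by rw [hfW, map_natCast])
      refine ⟨a, ?_⟩
      have hz : (n : B) * (f a - PowerSeries.coeff n h) = 0 := by
        have h3 : f W = (n : B) * f a := by rw [ha, map_mul, map_natCast]
        rw [mul_sub, ← h3, hfW, sub_self]
      have := flat_nat_regular (A := A) n (by omega) _ hz
      exact sub_eq_zero.mp this
  choose α hα using main
  have hmap : PowerSeries.map f (PowerSeries.mk α) = h := by
    apply PowerSeries.ext
    intro k
    rw [PowerSeries.coeff_map, PowerSeries.coeff_mk, hα]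
  refine ⟨PowerSeries.mk α, ?_, ?_, ?_⟩
  · apply hfinj
    rw [map_zero, ← hh0, ← hmap]
    rw [← PowerSeries.coeff_zero_eq_constantCoeff, ← PowerSeries.coeff_zero_eq_constantCoeff,
      PowerSeries.coeff_map]
  · apply hfinj
    rw [map_one, ← hh1, ← hmap, PowerSeries.coeff_map]
  · have minj : Function.Injective (MvPowerSeries.map (σ := Fin 2) f) := by
      intro φ ψ hφψ
      apply MvPowerSeries.ext
      intro d
      apply hfinj
      rw [← MvPowerSeries.coeff_map, ← MvPowerSeries.coeff_map, hφψ]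
    apply minj
    rw [map_substIn, map_substVars, hmap, heq]
end

section
/- Let f : A → B be a faithfully flat ring map. Then A is the equalizer of the two maps η_L, η_R : B → B ⊗_A B given by b ↦ b ⊗ 1 and b ↦ 1 ⊗ b; that is, the sequence 0 → A → B → B ⊗_A B is exact. -/
/-!
STATEMENT 2: Faithfully flat descent: `A` is the equalizer of the two maps
`B ⇉ B ⊗[A] B`, i.e. `0 → A → B → B ⊗_A B` is exact.
-/

open TensorProduct

section Aux

variable (A B : Type*) [CommRing A] [CommRing B] [Algebra A B]

/-- The map `b ↦ 1 ⊗ b - b ⊗ 1`. -/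
noncomputable def auxL23 : B →ₗ[A] B ⊗[A] B :=
  TensorProduct.mk A B B 1 - (TensorProduct.mk A B B).flip 1

lemma auxL23_apply (b : B) : auxL23 A B b = 1 ⊗ₜ[A] b - b ⊗ₜ[A] 1 := rfl

/-- Homotopy `h1 : B ⊗ B → B ⊗ A`, `x ⊗ y ↦ (x * y) ⊗ 1`. -/
noncomputable def auxH1 : B ⊗[A] B →ₗ[A] B ⊗[A] A :=
  ((TensorProduct.mk A B A).flip 1) ∘ₗ LinearMap.mul' A B

lemma auxH1_apply (x y : B) : auxH1 A B (x ⊗ₜ[A] y) = (x * y) ⊗ₜ[A] (1 : A) := rfl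

/-- Homotopy `h2 : B ⊗ (B ⊗ B) → B ⊗ B`, `x ⊗ (y ⊗ z) ↦ (x * y) ⊗ z`. -/
noncomputable def auxH2 : B ⊗[A] (B ⊗[A] B) →ₗ[A] B ⊗[A] B :=
  (LinearMap.mul' A B).rTensor B ∘ₗ (TensorProduct.assoc A B B B).symm.toLinearMap

lemma auxH2_apply (x y z : B) :
    auxH2 A B (x ⊗ₜ[A] (y ⊗ₜ[A] z)) = (x * y) ⊗ₜ[A] z := by
  simp [auxH2]

lemma aux_homotopy (u : B ⊗[A] B) :
    ((Algebra.linearMap A B).lTensor B) (auxH1 A B u)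
      + auxH2 A B (((auxL23 A B)).lTensor B u) = u := by
  induction u using TensorProduct.induction_on with
  | zero => simp
  | tmul x y =>
      rw [LinearMap.lTensor_tmul, auxL23_apply, auxH1_apply, LinearMap.lTensor_tmul,
        Algebra.linearMap_apply, map_one, tmul_sub, map_sub, auxH2_apply, auxH2_apply,
        mul_one]
      abel
  | add u v hu hv =>
      simp only [map_add]
      rw [add_add_add_comm, hu, hv]

lemma aux_comp : auxL23 A B ∘ₗ Algebra.linearMap A B = 0 := by
  apply LinearMap.ext; intro a
  rw [LinearMap.comp_apply, Algebra.linearMap_apply, auxL23_apply, LinearMap.zero_apply,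
    Algebra.algebraMap_eq_smul_one, smul_tmul, sub_self]

lemma aux_exact [Module.FaithfullyFlat A B] :
    Function.Exact (Algebra.linearMap A B) (auxL23 A B) := by
  apply Module.FaithfullyFlat.lTensor_reflects_exact A B
  intro u
  constructor
  · intro hu
    refine ⟨auxH1 A B u, ?_⟩
    have := aux_homotopy A B u
    rw [hu, map_zero, add_zero] at this
    exact this
  · rintro ⟨v, rfl⟩
    rw [← LinearMap.comp_apply, ← LinearMap.lTensor_comp, aux_comp,
      LinearMap.lTensor_zero, LinearMap.zero_apply]

end Aux

/-- For a faithfully flat map `A → B`, the map `A → B` is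
injective and an element `b : B` satisfies `b ⊗ 1 = 1 ⊗ b` in `B ⊗[A] B` if and
only if it comes from `A`. -/
theorem faithfullyFlat_equalizer
    {A B : Type*} [CommRing A] [CommRing B] [Algebra A B]
    [Module.FaithfullyFlat A B] :
    Function.Injective (algebraMap A B) ∧
      ∀ b : B, (b ⊗ₜ[A] (1 : B) = (1 : B) ⊗ₜ[A] b) ↔ b ∈ (algebraMap A B).range := by
  constructor
  · -- injectivity
    intro a a' h
    rw [← sub_eq_zero] at h ⊢
    rw [← map_sub] at h
    set c := a - a' with hc
    have hzero : (LinearMap.toSpanSingleton A A c).rTensor B = 0 := by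
      apply TensorProduct.ext'
      intro x y
      simp only [LinearMap.rTensor_tmul, LinearMap.toSpanSingleton_apply, LinearMap.zero_apply]
      have h1 : c ⊗ₜ[A] (x • y) = (0 : A ⊗[A] B) := by
        have h2 : c ⊗ₜ[A] (x • y) = (c • (1 : A)) ⊗ₜ[A] (x • y) := by
          rw [smul_eq_mul, mul_one]
        rw [h2, smul_tmul, Algebra.smul_def, h, zero_mul, tmul_zero]
      rw [smul_tmul, h1]
    have := (Module.FaithfullyFlat.zero_iff_rTensor_zero A B
      (LinearMap.toSpanSingleton A A c)).2 hzero
    have := congrFun (congrArg DFunLike.coe this) 1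
    simpa using this
  · -- equalizer
    intro b
    have hexact := aux_exact A B b
    constructor
    · intro hb
      have h0 : auxL23 A B b = 0 := by rw [auxL23_apply, hb, sub_self]
      obtain ⟨a, ha⟩ := hexact.1 h0
      exact ⟨a, ha⟩
    · rintro ⟨a, rfl⟩
      have h0 : auxL23 A B (algebraMap A B a) = 0 := hexact.2 ⟨a, rfl⟩
      rw [auxL23_apply, sub_eq_zero] at h0
      exact h0.symm
end

section
/- Let B̃ be the 2-adic completion of Z₂((t)) (equivalently of W(F₄)((t)), restricted to the Z₂-coefficient subring), and let α ∈ B̃ be the unique solution of α³ − tα − 2 = 0. Then α is divisible by 2 in B̃, and c := (1/2)αt satisfies the equation c = −1 + 4 t^{−3} c³. This recursion has a unique solution in the 2-adic completion of Z₂[t^{−3}], namely c = −1 − 4t^{−3} − 48t^{−6} − 192t^{−9} − ⋯; in particular c lies in the subring which is the 2-adic completion of Z₂[t^{−3}]. -/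
/-!
STATEMENT 16: in `B̃`, the 2-adic completion of `ℤ₂((t))`, the unique solution
`α` of `α³ − tα − 2 = 0` is divisible by 2, and `c = αt/2` satisfies
`c = −1 + 4t⁻³c³`; this recursion has a unique solution in the 2-adic
completion of `ℤ₂[t⁻³]`, so `c` lies in that subring.
-/

noncomputable section

/-- `ℤ₂[[t]][t⁻¹] = ℤ₂((t))`. -/
abbrev LaurentZ2 := Localization.Away (PowerSeries.X : PowerSeries ℤ_[2])

end

open PowerSeries in
lemma Stmt16.hMle : Submonoid.powers (PowerSeries.X : PowerSeries ℤ_[2]) ≤ nonZeroDivisors _ :=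
  powers_le_nonZeroDivisors_of_noZeroDivisors PowerSeries.X_ne_zero

noncomputable instance : IsDomain LaurentZ2 := IsLocalization.isDomain_localization Stmt16.hMle

lemma Stmt16.alg_inj : Function.Injective (algebraMap (PowerSeries ℤ_[2]) LaurentZ2) :=
  IsLocalization.injective _ Stmt16.hMle

/-- Reduction mod 2 on `ℤ₂[[t]]`. -/
noncomputable abbrev Stmt16.phi : PowerSeries ℤ_[2] →+* PowerSeries (ZMod 2) :=
  PowerSeries.map (PadicInt.toZMod)

lemma Stmt16.two_dvd_of_phi_eq_zero {q : PowerSeries ℤ_[2]} (h : Stmt16.phi q = 0) : 2 ∣ q := by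
  have hc : ∀ n, (2 : ℤ_[2]) ∣ PowerSeries.coeff n q := by
    intro n
    have h0 : PadicInt.toZMod (PowerSeries.coeff n q) = 0 := by
      have := congrArg (PowerSeries.coeff n) h
      simpa using this
    have hker : PowerSeries.coeff n q ∈ RingHom.ker (PadicInt.toZMod : ℤ_[2] →+* ZMod 2) := h0
    rw [PadicInt.ker_toZMod, PadicInt.maximalIdeal_eq_span_p, Ideal.mem_span_singleton] at hker
    exact_mod_cast hker
  refine ⟨PowerSeries.mk fun n => (hc n).choose, ?_⟩
  ext n
  have h2 : (2 : PowerSeries ℤ_[2]) = PowerSeries.C 2 := (map_ofNat (PowerSeries.C (R := ℤ_[2])) 2).symm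
  rw [h2, PowerSeries.coeff_C_mul, PowerSeries.coeff_mk]
  exact (hc n).choose_spec

open PowerSeries in
/-- Key mod-2 lemma in `ℤ₂((t))`: a root of `y(y²−t) ≡ 0 (mod 2)` is `≡ 0 (mod 2)`. -/
lemma Stmt16.key_dvd (y : LaurentZ2)
    (h : (2:LaurentZ2) ∣ y * (y^2 - algebraMap (PowerSeries ℤ_[2]) LaurentZ2 X)) :
    (2:LaurentZ2) ∣ y := by
  set A := algebraMap (PowerSeries ℤ_[2]) LaurentZ2 with hA
  obtain ⟨⟨p, s⟩, hp⟩ := IsLocalization.surj (Submonoid.powers (X : PowerSeries ℤ_[2])) y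
  obtain ⟨k, hk⟩ := s.2
  obtain ⟨z, hz⟩ := h
  obtain ⟨⟨q, s'⟩, hq⟩ := IsLocalization.surj (Submonoid.powers (X : PowerSeries ℤ_[2])) z
  obtain ⟨m, hm⟩ := s'.2
  simp only at hp hq
  rw [← hk] at hp
  rw [← hm] at hq
  have hp' : y * (A X)^k = A p := by rw [← map_pow]; exact hp
  have hq' : z * (A X)^m = A q := by rw [← map_pow]; exact hq
  have hmain : p^3 * X^m - p * X^(2*k+1+m) = 2 * (q * X^(3*k)) := by
    apply Stmt16.alg_inj
    have e1 : A (p^3 * X^m - p * X^(2*k+1+m)) =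
        (y * (y^2 - A X)) * (A X)^(3*k) * (A X)^m := by
      simp only [map_sub, map_mul, map_pow]
      rw [← hp']; ring
    have e2 : A (2 * (q * X^(3*k))) = (y * (y^2 - A X)) * (A X)^(3*k) * (A X)^m := by
      simp only [map_mul, map_pow, map_ofNat]
      rw [hz, ← hq']; ring
    rw [e1, e2]
  have h2zero : (2 : PowerSeries (ZMod 2)) = 0 := by
    rw [← map_ofNat (PowerSeries.C (R := ZMod 2)) 2, show (2:ZMod 2) = 0 from rfl, map_zero]
  have hphi : Stmt16.phi p * ((Stmt16.phi p)^2 - X^(2*k+1)) * X^m = 0 := by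
    have h0 := congrArg Stmt16.phi hmain
    simp only [map_sub, map_mul, map_pow, PowerSeries.map_X, map_ofNat, h2zero, zero_mul] at h0
    rw [pow_add] at h0
    linear_combination h0
  haveI : Fact (Nat.Prime 2) := ⟨Nat.prime_two⟩
  have hXm : (X : PowerSeries (ZMod 2))^m ≠ 0 := pow_ne_zero _ PowerSeries.X_ne_zero
  have hcases : Stmt16.phi p = 0 ∨ (Stmt16.phi p)^2 - X^(2*k+1) = 0 :=
    mul_eq_zero.mp ((mul_eq_zero.mp hphi).resolve_right hXm)
  have hp0 : Stmt16.phi p = 0 := by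
    rcases hcases with h1 | h1
    · exact h1
    · exfalso
      have hsq : (Stmt16.phi p)^2 = X^(2*k+1) := by linear_combination h1
      have hpne : Stmt16.phi p ≠ 0 := by
        intro hz0
        rw [hz0, zero_pow (by norm_num)] at hsq
        exact pow_ne_zero (2*k+1) (PowerSeries.X_ne_zero (R := ZMod 2)) hsq.symm
      have hord := congrArg PowerSeries.order hsq
      rw [pow_two, PowerSeries.order_mul, PowerSeries.order_X_pow] at hord
      have hne : PowerSeries.order (Stmt16.phi p) ≠ ⊤ := by
        simpa [PowerSeries.order_eq_top] using hpne
      lift PowerSeries.order (Stmt16.phi p) to ℕ using hne with n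
      have : n + n = 2*k+1 := by exact_mod_cast hord
      omega
  obtain ⟨p', hpp⟩ := Stmt16.two_dvd_of_phi_eq_zero hp0
  set invS := IsLocalization.Away.invSelf (S := LaurentZ2) (X : PowerSeries ℤ_[2]) with hinv
  have hI : A X * invS = 1 := IsLocalization.Away.mul_invSelf _
  refine ⟨A p' * invS^k, ?_⟩
  calc y = y * (A X * invS)^k := by rw [hI, one_pow, mul_one]
  _ = (y * (A X)^k) * invS^k := by ring
  _ = 2 * (A p' * invS^k) := by rw [hp', hpp]; push_cast [map_mul, map_ofNat]; ring

section Helpers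
variable {Bt : Type} [CommRing Bt]

lemma Stmt16.smul_top_eq' (I : Ideal Bt) : (I • (⊤ : Submodule Bt Bt)) = I := by
  rw [smul_eq_mul, Ideal.mul_top]

lemma Stmt16.mem_pow_iff {a x : Bt} {n : ℕ} : x ∈ (Ideal.span {a})^n ↔ a^n ∣ x := by
  rw [Ideal.span_singleton_pow, Ideal.mem_span_singleton]

lemma Stmt16.haus' (hc : IsAdicComplete (Ideal.span {(2:Bt)}) Bt) {x : Bt}
    (h : ∀ n, (2:Bt)^n ∣ x) : x = 0 := by
  refine IsHausdorff.haus hc.toIsHausdorff x fun n => SModEq.zero.2 ?_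
  rw [Stmt16.smul_top_eq']
  exact Stmt16.mem_pow_iff.2 (h n)

lemma Stmt16.limit' (hc : IsAdicComplete (Ideal.span {(2:Bt)}) Bt) (d : ℕ → Bt)
    (hd : ∀ m n, m ≤ n → (2:Bt)^m ∣ d n - d m) : ∃ L, ∀ n, (2:Bt)^n ∣ L - d n := by
  obtain ⟨L, hL⟩ := IsPrecomplete.prec hc.toIsPrecomplete
    (f := d) (by
      intro m n hmn
      rw [SModEq.sub_mem, Stmt16.smul_top_eq']
      exact Stmt16.mem_pow_iff.2 (dvd_sub_comm.1 (hd m n hmn)))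
  refine ⟨L, fun n => ?_⟩
  have := (hL n).symm
  rw [SModEq.sub_mem, Stmt16.smul_top_eq'] at this
  exact Stmt16.mem_pow_iff.1 this

lemma Stmt16.unit' (hc : IsAdicComplete (Ideal.span {(2:Bt)}) Bt) {v : Bt}
    (hv : (2:Bt) ∣ v) : IsUnit (1 - v) := by
  set d : ℕ → Bt := fun n => ∑ i ∈ Finset.range n, v^i with hd
  have hdvd : ∀ m n, m ≤ n → (2:Bt)^m ∣ d n - d m := by
    intro m n hmn
    rw [hd]
    simp only
    rw [← Finset.sum_Ico_eq_sub _ hmn]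
    refine Finset.dvd_sum fun i hi => ?_
    exact dvd_trans (pow_dvd_pow 2 (Finset.mem_Ico.1 hi).1) (pow_dvd_pow_of_dvd hv i)
  obtain ⟨L, hL⟩ := Stmt16.limit' hc d hdvd
  refine IsUnit.of_mul_eq_one (a := 1 - v) L ?_
  have key : ∀ n, (2:Bt)^n ∣ (1 - v) * L - 1 := by
    intro n
    have h1 : (2:Bt)^n ∣ (1 - v) * (L - d n) := (hL n).mul_left _
    have h2 : (1 - v) * d n = 1 - v^n := by
      rw [hd]; simp only
      have := geom_sum_mul v n
      linear_combination -this
    have h3 : (2:Bt)^n ∣ v^n := pow_dvd_pow_of_dvd hv n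
    obtain ⟨e1, he1⟩ := h1; obtain ⟨e3, he3⟩ := h3
    exact ⟨e1 - e3, by linear_combination he1 - he3 + h2⟩
  have := Stmt16.haus' hc key
  linear_combination this

/-- Iterates of the recursion `x ↦ -1 + 4ux³`. -/
def Stmt16.recSeq (u : Bt) : ℕ → Bt
  | 0 => -1
  | n+1 => -1 + 4*u*(Stmt16.recSeq u n)^3

end Helpers

/-- Let `B̃` be (any model of) the 2-adic completion of
`ℤ₂((t))`: a 2-adically complete ring with a map `f` from `ℤ₂((t))` inducing
isomorphisms modulo all powers of 2.  Write `t = f(t)`, `t⁻¹ = f(t⁻¹)`, and let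
`α ∈ B̃` satisfy `α³ − tα − 2 = 0`.  Let `S₀ ⊆ B̃` be the subring generated by
`ℤ₂` and `t⁻³`, and say `b` "lies in the 2-adic completion of `ℤ₂[t⁻³]`" if for
every `k` it is congruent to an element of `S₀` modulo `2^k`.  Then `α` is
divisible by 2; the element `c` with `2c = αt` satisfies `c = −1 + 4t⁻³c³` and
lies in the 2-adic completion of `ℤ₂[t⁻³]`; it is the unique such solution of
the recursion, and unique with `2c = αt`. -/
theorem c_recursion_in_completion
    (Bt : Type) [CommRing Bt] (f : LaurentZ2 →+* Bt)
    (hcomplete : IsAdicComplete (Ideal.span {(2 : Bt)}) Bt)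
    (htower : ∀ n : ℕ,
      Function.Surjective ((Ideal.Quotient.mk ((Ideal.span {(2 : Bt)}) ^ n)).comp f) ∧
      RingHom.ker ((Ideal.Quotient.mk ((Ideal.span {(2 : Bt)}) ^ n)).comp f) =
        (Ideal.span {(2 : LaurentZ2)}) ^ n)
    (α : Bt)
    (hα : α ^ 3 - f (algebraMap (PowerSeries ℤ_[2]) LaurentZ2 PowerSeries.X) * α - 2 = 0) :
    letI tB : Bt := f (algebraMap (PowerSeries ℤ_[2]) LaurentZ2 PowerSeries.X)
    letI tinv : Bt := f (IsLocalization.Away.invSelf (S := LaurentZ2) (PowerSeries.X : PowerSeries ℤ_[2]))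
    letI S₀ : Subring Bt := Subring.closure
      ({tinv ^ 3} ∪ Set.range (fun z : ℤ_[2] =>
        f (algebraMap (PowerSeries ℤ_[2]) LaurentZ2 (PowerSeries.C z))))
    letI P : Bt → Prop := fun b =>
      ∀ k : ℕ, ∃ y ∈ S₀, b - y ∈ (Ideal.span {(2 : Bt)}) ^ k
    (∃ β : Bt, α = 2 * β) ∧
    (∃ c : Bt,
      2 * c = α * tB ∧
      c = -1 + 4 * tinv ^ 3 * c ^ 3 ∧
      P c ∧
      (∀ c' : Bt, 2 * c' = α * tB → c' = c) ∧
      (∀ c'' : Bt, P c'' → c'' = -1 + 4 * tinv ^ 3 * c'' ^ 3 → c'' = c)) := by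
  set tL : LaurentZ2 := algebraMap (PowerSeries ℤ_[2]) LaurentZ2 PowerSeries.X with htL
  set invS : LaurentZ2 :=
    IsLocalization.Away.invSelf (S := LaurentZ2) (PowerSeries.X : PowerSeries ℤ_[2]) with hinvS
  set tB : Bt := f tL with htB
  set tinv : Bt := f invS with htinv
  set u : Bt := tinv^3 with hu
  have hIL : tL * invS = 1 := IsLocalization.Away.mul_invSelf _
  have huT : tB * tinv = 1 := by rw [htB, htinv, ← map_mul, hIL, map_one]
  -- 2 is regular in Bt
  have h2ne : (2 : LaurentZ2) ≠ 0 := by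
    intro h0
    have : (2 : PowerSeries ℤ_[2]) = 0 := Stmt16.alg_inj (by rw [map_ofNat, map_zero, h0])
    have hcc := congrArg (PowerSeries.constantCoeff (R := ℤ_[2])) this
    rw [map_ofNat, map_zero] at hcc
    exact two_ne_zero hcc
  have hreg : ∀ x : Bt, 2 * x = 0 → x = 0 := by
    intro x hx
    refine Stmt16.haus' hcomplete fun n => ?_
    obtain ⟨y, hy⟩ := (htower (n+1)).1 (Ideal.Quotient.mk _ x)
    rw [RingHom.comp_apply, Ideal.Quotient.mk_eq_mk_iff_sub_mem] at hy
    have hy2 : (2:Bt)^(n+1) ∣ f y - x := Stmt16.mem_pow_iff.1 hy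
    have h2y : (2:Bt)^(n+1) ∣ f (2*y) := by
      obtain ⟨e, he⟩ := hy2
      exact ⟨2*e, by rw [map_mul, map_ofNat]; linear_combination 2*he + hx⟩
    have hker : 2*y ∈ RingHom.ker ((Ideal.Quotient.mk ((Ideal.span {(2:Bt)})^(n+1))).comp f) := by
      rw [RingHom.mem_ker, RingHom.comp_apply, Ideal.Quotient.eq_zero_iff_mem]
      exact Stmt16.mem_pow_iff.2 h2y
    rw [(htower (n+1)).2] at hker
    have h2yL : (2:LaurentZ2)^(n+1) ∣ 2*y := Stmt16.mem_pow_iff.1 hker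
    obtain ⟨r, hr⟩ := h2yL
    have hyr : y = 2^n * r := by
      have : (2:LaurentZ2) * (y - 2^n*r) = 0 := by rw [pow_succ] at hr; linear_combination hr
      have := (mul_eq_zero.1 this).resolve_left h2ne
      linear_combination this
    have : (2:Bt)^n ∣ f y := ⟨f r, by rw [hyr, map_mul, map_pow, map_ofNat]⟩
    obtain ⟨e1, he1⟩ := this
    obtain ⟨e2, he2⟩ := hy2
    exact ⟨e1 - 2*e2, by rw [pow_succ] at he2; linear_combination he1 - he2⟩
  -- Step A : α is divisible by 2
  obtain ⟨y, hy⟩ := (htower 2).1 (Ideal.Quotient.mk _ α)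
  rw [RingHom.comp_apply, Ideal.Quotient.mk_eq_mk_iff_sub_mem] at hy
  have hsub : (2:Bt)^2 ∣ f y - α := Stmt16.mem_pow_iff.1 hy
  have hfy : (2:Bt)^2 ∣ f (y^3 - tL*y - 2) := by
    obtain ⟨e, he⟩ := hsub
    refine ⟨e * ((f y)^2 + (f y)*α + α^2 - tB), ?_⟩
    simp only [map_sub, map_mul, map_pow, map_ofNat]
    rw [← htB]
    linear_combination hα + ((f y)^2 + (f y)*α + α^2 - tB) * he
  have hker : y^3 - tL*y - 2 ∈
      RingHom.ker ((Ideal.Quotient.mk ((Ideal.span {(2:Bt)})^2)).comp f) := by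
    rw [RingHom.mem_ker, RingHom.comp_apply, Ideal.Quotient.eq_zero_iff_mem]
    exact Stmt16.mem_pow_iff.2 hfy
  rw [(htower 2).2] at hker
  obtain ⟨w, hw⟩ : (2:LaurentZ2)^2 ∣ y^3 - tL*y - 2 := Stmt16.mem_pow_iff.1 hker
  have hyfac : (2:LaurentZ2) ∣ y * (y^2 - tL) := ⟨1 + 2*w, by linear_combination hw⟩
  obtain ⟨y', hy'⟩ := Stmt16.key_dvd y hyfac
  obtain ⟨z, hz⟩ := hsub
  have hα2 : α = 2 * (f y' - 2*z) := by
    have hfy' : f y = 2 * f y' := by rw [hy', map_mul, map_ofNat]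
    rw [pow_two] at hz
    linear_combination hfy' - hz
  -- Step B : construct c as limit of the recursion
  set d : ℕ → Bt := Stmt16.recSeq u with hdDef
  have hd0 : d 0 = -1 := rfl
  have hdS : ∀ n, d (n+1) = -1 + 4*u*(d n)^3 := fun n => rfl
  have hstep : ∀ n, (2:Bt)^(n+2) ∣ d (n+1) - d n := by
    intro n
    induction n with
    | zero =>
      refine ⟨-u, ?_⟩
      rw [hdS 0, hd0]; ring
    | succ n ih =>
      obtain ⟨e, he⟩ := ih
      exact ⟨2*u*e*((d (n+1))^2 + (d (n+1))*(d n) + (d n)^2), by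
        linear_combination hdS (n+1) - hdS n +
          (4*u*((d (n+1))^2 + (d (n+1))*(d n) + (d n)^2)) * he⟩
  have hdvd : ∀ m n, m ≤ n → (2:Bt)^m ∣ d n - d m := by
    intro m n hmn
    induction n, hmn using Nat.le_induction with
    | base => simp
    | succ n hmn ih =>
      obtain ⟨e1, he1⟩ := hstep n
      obtain ⟨e2, he2⟩ := ih
      refine ⟨2^(n+2-m)*e1 + e2, ?_⟩
      have hpow : (2:Bt)^(n+2) = 2^m * 2^(n+2-m) := by
        rw [← pow_add]; congr 1; omega
      rw [hpow] at he1
      linear_combination he1 + he2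
  obtain ⟨c, hc⟩ := Stmt16.limit' hcomplete d hdvd
  -- c satisfies the recursion
  have hfix : c = -1 + 4*u*c^3 := by
    have key : ∀ n, (2:Bt)^n ∣ (-1 + 4*u*c^3) - c := by
      intro n
      obtain ⟨e1, he1⟩ := hc n
      obtain ⟨e2, he2⟩ := hc (n+1)
      refine ⟨4*u*e1*(c^2 + c*(d n) + (d n)^2) - 2*e2, ?_⟩
      rw [pow_succ] at he2
      have hd1 := hdS n
      linear_combination (4*u*(c^2 + c*(d n) + (d n)^2)) * he1 - he2 - hd1
    have := Stmt16.haus' hcomplete key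
    linear_combination -this
  -- the subring S₀ and property P
  set S₀ : Subring Bt := Subring.closure
      ({tinv ^ 3} ∪ Set.range (fun z : ℤ_[2] =>
        f (algebraMap (PowerSeries ℤ_[2]) LaurentZ2 (PowerSeries.C z)))) with hS₀
  have huS : u ∈ S₀ := Subring.subset_closure (Set.mem_union_left _ rfl)
  have h4 : (4:Bt) ∈ S₀ := by
    have h1 := S₀.one_mem
    have h := S₀.add_mem (S₀.add_mem (S₀.add_mem h1 h1) h1) h1
    rw [show (1:Bt)+1+1+1 = 4 by norm_num] at h
    exact h
  have hdS₀ : ∀ n, d n ∈ S₀ := by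
    intro n
    induction n with
    | zero => rw [hd0]; exact S₀.neg_mem S₀.one_mem
    | succ n ih =>
      rw [hdS n]
      exact S₀.add_mem (S₀.neg_mem S₀.one_mem)
        (S₀.mul_mem (S₀.mul_mem h4 huS) (S₀.pow_mem ih 3))
  have hPc : ∀ k : ℕ, ∃ y ∈ S₀, c - y ∈ (Ideal.span {(2 : Bt)}) ^ k :=
    fun k => ⟨d k, hdS₀ k, Stmt16.mem_pow_iff.2 (hc k)⟩
  -- α = 2 c tinv
  set a : Bt := 2*c*tinv with ha
  have ha_root : a^3 - tB*a - 2 = 0 := by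
    rw [ha]
    linear_combination (-2)*hfix - 2*c*huT - 8*c^3*hu
  have hΔ : (α - a) * ((α^2 + α*a + a^2) - tB) = 0 := by linear_combination hα - ha_root
  have hq4 : (2:Bt) ∣ tinv * (α^2 + α*a + a^2) := by
    refine ⟨tinv*(2*(f y' - 2*z)^2 + (f y' - 2*z)*(2*c*tinv) + 2*c^2*tinv^2), ?_⟩
    rw [ha, hα2]; ring
  have hunit : IsUnit ((α^2 + α*a + a^2) - tB) := by
    have h1 : IsUnit (1 - tinv * (α^2 + α*a + a^2)) := Stmt16.unit' hcomplete hq4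
    have h2 : IsUnit (-tB) := (IsUnit.of_mul_eq_one (a := tB) tinv huT).neg
    have h3 : (α^2 + α*a + a^2) - tB = (-tB) * (1 - tinv * (α^2 + α*a + a^2)) := by
      have : tB * (tinv * (α^2 + α*a + a^2)) = (α^2 + α*a + a^2) := by
        rw [← mul_assoc, huT, one_mul]
      linear_combination -this
    rw [h3]
    exact h2.mul h1
  have hαa : α = a := by
    have : ((α^2 + α*a + a^2) - tB) * (α - a) = ((α^2 + α*a + a^2) - tB) * 0 := by
      rw [mul_zero]; linear_combination hΔ
    have := hunit.mul_left_cancel this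
    linear_combination this
  have h2c : 2*c = α * tB := by
    rw [hαa, ha]
    linear_combination -2*c*huT
  refine ⟨⟨f y' - 2*z, hα2⟩, c, h2c, ?_, hPc, ?_, ?_⟩
  · exact hfix
  · intro c' hc'
    have : 2*(c' - c) = 0 := by linear_combination hc' - h2c
    have := hreg _ this
    linear_combination this
  · intro c'' _ hfix''
    have key : ∀ n, (2:Bt)^n ∣ c'' - c := by
      intro n
      induction n with
      | zero => simp
      | succ n ih =>
        obtain ⟨g, hg⟩ := ih
        refine ⟨2*u*g*(c''^2 + c''*c + c^2), ?_⟩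
        rw [pow_succ]
        linear_combination hfix'' - hfix + (4*u*(c''^2 + c''*c + c^2))*hg
    have := Stmt16.haus' hcomplete key
    linear_combination this
end
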